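/- Let a², b², c² > 0 and define, for Q in the space S₀ of real symmetric traceless 3×3 matrices, f_bulk(Q) = −(a²/2) tr Q² − (b²/3) tr Q³ + (c²/4)(tr Q²)². Let s₊ = (b² + √(b⁴ + 24a²c²))/(4c²) and f_* = −(a²/3)s₊² − (2b²/27)s₊³ + (c²/9)s₊⁴. Then f_bulk(Q) ≥ f_* for every Q ∈ S₀, and f_bulk(Q) = f_* if and only if Q = s₊(n⊗n − (1/3)I) for some unit vector n ∈ ℝ³. In other words, the set of global minimisers of f_bulk is exactly the limit manifold S_* = { s₊(n⊗n − (1/3)I) : n ∈ S² }. -/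

import Mathlib

open Matrix

/-- The Landau-de Gennes bulk potential
`f_bulk(Q) = -(a²/2) tr Q² - (b²/3) tr Q³ + (c²/4)(tr Q²)²`,
where `a2`, `b2`, `c2` stand for `a²`, `b²`, `c²`. -/
noncomputable def fbulk (a2 b2 c2 : ℝ) (Q : Matrix (Fin 3) (Fin 3) ℝ) : ℝ :=
  -(a2 / 2) * (Q * Q).trace - (b2 / 3) * (Q * Q * Q).trace + (c2 / 4) * ((Q * Q).trace) ^ 2

private lemma scalar_min (a2 b2 c2 sp s : ℝ) (ha : 0 < a2) (hb : 0 < b2) (hc : 0 < c2)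
    (hrel : 2*c2*sp^2 = b2*sp + 3*a2) (hsp : 0 < sp) (hs : 0 ≤ s) :
    (-(a2/3)*sp^2 - (2*b2/27)*sp^3 + (c2/9)*sp^4) ≤ (-(a2/3)*s^2 - (2*b2/27)*s^3 + (c2/9)*s^4)
    ∧ ((-(a2/3)*s^2 - (2*b2/27)*s^3 + (c2/9)*s^4)
        = (-(a2/3)*sp^2 - (2*b2/27)*sp^3 + (c2/9)*sp^4) → s = sp) := by
  have hb' : b2 < 2*c2*sp := by
    have h1 : b2*sp < 2*c2*sp^2 := by nlinarith
    nlinarith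
  have hF : 0 < c2/9*s^2 + (2*c2*sp/9 - 2*b2/27)*s + (a2/6 + b2*sp/54) := by
    have h1 : 0 ≤ c2/9*s^2 := by positivity
    have h2 : 0 ≤ (2*c2*sp/9 - 2*b2/27)*s := by
      apply mul_nonneg _ hs; nlinarith
    have h3 : 0 < a2/6 + b2*sp/54 := by positivity
    linarith
  have key : (-(a2/3)*s^2 - (2*b2/27)*s^3 + (c2/9)*s^4)
      - (-(a2/3)*sp^2 - (2*b2/27)*sp^3 + (c2/9)*sp^4)
      = (s-sp)^2 * (c2/9*s^2 + (2*c2*sp/9 - 2*b2/27)*s + (a2/6 + b2*sp/54)) := by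
    linear_combination ((s^2-sp^2)/9 + (s-sp)^2/18) * hrel
  constructor
  · nlinarith [sq_nonneg (s - sp)]
  · intro heq
    have h0 : (s-sp)^2 * (c2/9*s^2 + (2*c2*sp/9 - 2*b2/27)*s + (a2/6 + b2*sp/54)) = 0 := by
      linarith [key]
    have h1 := (mul_eq_zero.mp h0).resolve_right (ne_of_gt hF)
    have h2 := pow_eq_zero_iff (n := 2) (by norm_num) |>.mp h1
    linarith

private lemma splus_facts (a2 b2 c2 sp : ℝ) (ha : 0 < a2) (hb : 0 < b2) (hc : 0 < c2)
    (hsplus : sp = (b2 + Real.sqrt (b2 ^ 2 + 24 * a2 * c2)) / (4 * c2)) :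
    0 < sp ∧ 2*c2*sp^2 = b2*sp + 3*a2 := by
  have hD : (0:ℝ) ≤ b2^2 + 24*a2*c2 := by positivity
  have hr2 : Real.sqrt (b2^2 + 24*a2*c2) ^ 2 = b2^2 + 24*a2*c2 := Real.sq_sqrt hD
  have hr0 : 0 ≤ Real.sqrt (b2^2 + 24*a2*c2) := Real.sqrt_nonneg _
  constructor
  · rw [hsplus]; exact div_pos (by linarith) (by linarith)
  · rw [hsplus]
    generalize Real.sqrt (b2^2 + 24*a2*c2) = r at hr2 ⊢
    field_simp
    linear_combination 2 * hr2

private lemma eig_identify (s t : ℝ) (hs : 0 < s) (h2 : t^2 = s^2/9) (h3 : t^3 = -(s^3)/27) :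
    t = -s/3 := by
  have h0 : (t - s/3)*(t + s/3) = 0 := by linear_combination h2
  rcases mul_eq_zero.mp h0 with h | h
  · have ht : t = s/3 := by linarith
    rw [ht] at h3
    exfalso; nlinarith [pow_pos hs 3]
  · linarith

private lemma myconj_trace {m : Type*} [Fintype m] [DecidableEq m] (V M : Matrix m m ℝ)
    (hV : star V * V = 1) : (V * M * star V).trace = M.trace := by
  rw [trace_mul_cycle, hV, one_mul]

private lemma myconj_mul {m : Type*} [Fintype m] [DecidableEq m] (V M N : Matrix m m ℝ)
    (hV : star V * V = 1) : (V * M * star V) * (V * N * star V) = V * (M * N) * star V := by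
  have h : star V * (V * (N * star V)) = N * star V := by rw [← mul_assoc, hV, one_mul]
  simp only [mul_assoc, h]

private lemma myconj_single (V : Matrix (Fin 3) (Fin 3) ℝ) (k : Fin 3) :
    V * diagonal (Pi.single k 1) * star V
      = vecMulVec (fun j => V j k) (fun j => V j k) := by
  have hW : ∀ i q, (V * diagonal (Pi.single k (1:ℝ))) i q = if q = k then V i k else 0 := by
    intro i q
    rw [mul_diagonal]
    by_cases h : q = k <;> simp [h, Pi.single_apply]
  ext i j
  rw [mul_apply, Finset.sum_eq_single k
    (by intro b _ hb; rw [hW]; simp [hb]) (by simp)]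
  rw [hW]
  simp [vecMulVec_apply, star_apply, mul_comm]

private lemma build (Q V : Matrix (Fin 3) (Fin 3) ℝ) (l : Fin 3 → ℝ) (k : Fin 3) (s : ℝ)
    (hV1 : star V * V = 1) (hV2 : V * star V = 1)
    (hspec : Q = V * diagonal l * star V)
    (hlk : l k = 2*s/3) (hlo : ∀ i, i ≠ k → l i = -s/3) :
    ∃ n : Fin 3 → ℝ, n ⬝ᵥ n = 1
      ∧ Q = s • (vecMulVec n n - (3 : ℝ)⁻¹ • (1 : Matrix (Fin 3) (Fin 3) ℝ)) := by
  refine ⟨fun j => V j k, ?_, ?_⟩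
  · have h : (star V * V) k k = (1 : Matrix (Fin 3) (Fin 3) ℝ) k k := by rw [hV1]
    simp only [mul_apply, star_apply, star_trivial, one_apply_eq] at h
    simpa [dotProduct, mul_comm] using h
  · have hdiag : diagonal l
        = s • diagonal (Pi.single k (1:ℝ)) - (s/3) • (1 : Matrix (Fin 3) (Fin 3) ℝ) := by
      ext i j
      rcases eq_or_ne i j with rfl | hij
      · rcases eq_or_ne i k with rfl | hik
        · simp [hlk]; ring
        · simp [hlo i hik, Pi.single_apply, hik]; ring
      · simp [diagonal_apply_ne _ hij, one_apply_ne hij,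
          diagonal_apply_ne (Pi.single k (1:ℝ)) hij]

    have step : V * (s • diagonal (Pi.single k (1:ℝ)) - (s/3) • (1 : Matrix (Fin 3) (Fin 3) ℝ))
          * star V
        = s • (V * diagonal (Pi.single k (1:ℝ)) * star V) - (s/3) • (V * star V) := by
      rw [Matrix.mul_sub, Matrix.sub_mul, mul_smul_comm, smul_mul_assoc, mul_smul_comm,
        smul_mul_assoc, mul_one]
    rw [hspec, hdiag, step, myconj_single V k, hV2, smul_sub, smul_smul,
      show s * (3:ℝ)⁻¹ = s/3 by ring]

private lemma rev_traces (Q : Matrix (Fin 3) (Fin 3) ℝ) (n : Fin 3 → ℝ) (s : ℝ)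
    (hn : n ⬝ᵥ n = 1)
    (hQ : Q = s • (vecMulVec n n - (3:ℝ)⁻¹ • (1 : Matrix (Fin 3) (Fin 3) ℝ))) :
    (Q*Q).trace = 2/3*s^2 ∧ (Q*Q*Q).trace = 2/9*s^3 := by
  have hn' : ∑ i, n i * n i = 1 := hn
  have hP2 : vecMulVec n n * vecMulVec n n = vecMulVec n n := by
    ext i j
    simp only [mul_apply, vecMulVec_apply]
    have h : ∀ q : Fin 3, (n i * n q) * (n q * n j) = (n i * n j) * (n q * n q) :=
      fun q => by ring
    rw [Finset.sum_congr rfl (fun q _ => h q), ← Finset.mul_sum, hn', mul_one]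
  have htrP : (vecMulVec n n).trace = 1 := by
    simpa [Matrix.trace, Matrix.diag, vecMulVec_apply] using hn'
  set P := vecMulVec n n with hPdef
  set M : Matrix (Fin 3) (Fin 3) ℝ := P - (3:ℝ)⁻¹ • 1 with hM
  have hM2 : M * M = (3:ℝ)⁻¹ • P + (9:ℝ)⁻¹ • (1 : Matrix (Fin 3) (Fin 3) ℝ) := by
    rw [hM]
    simp only [sub_mul, mul_sub, add_mul, mul_add, smul_mul_assoc, mul_smul_comm, smul_smul,
      one_mul, mul_one, hP2]
    module
  have hM3 : M * M * M = (3:ℝ)⁻¹ • P - (27:ℝ)⁻¹ • (1 : Matrix (Fin 3) (Fin 3) ℝ) := by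
    rw [hM2, hM]
    simp only [sub_mul, mul_sub, add_mul, mul_add, smul_mul_assoc, mul_smul_comm, smul_smul,
      one_mul, mul_one, hP2]
    module
  have hQM : Q = s • M := by rw [hQ, hM]
  have hQ2 : Q * Q = (s*s) • (M * M) := by
    rw [hQM, smul_mul_assoc, mul_smul_comm, smul_smul]
  have hQ3 : Q * Q * Q = (s*s*s) • (M * M * M) := by
    rw [hQ2, hQM, smul_mul_assoc, mul_smul_comm, smul_smul]
  constructor
  · rw [hQ2, trace_smul, hM2, trace_add, trace_smul, trace_smul, htrP, trace_one]
    simp; ring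
  · rw [hQ3, trace_smul, hM3, trace_sub, trace_smul, trace_smul, htrP, trace_one]
    simp; ring

set_option maxHeartbeats 1000000 in
/-- Over symmetric traceless 3×3 matrices, the bulk potential `f_bulk` is bounded below by
`f_* = -(a²/3)s₊² - (2b²/27)s₊³ + (c²/9)s₊⁴` with `s₊ = (b² + √(b⁴ + 24a²c²))/(4c²)`, and
the minimum is attained exactly on the limit manifold `{ s₊(n⊗n - (1/3)I) : n ∈ S² }`. -/
theorem fbulk_min_on_limit_manifold
    (a2 b2 c2 : ℝ) (ha : 0 < a2) (hb : 0 < b2) (hc : 0 < c2)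
    (splus fstar : ℝ)
    (hsplus : splus = (b2 + Real.sqrt (b2 ^ 2 + 24 * a2 * c2)) / (4 * c2))
    (hfstar : fstar = -(a2 / 3) * splus ^ 2 - (2 * b2 / 27) * splus ^ 3
      + (c2 / 9) * splus ^ 4) :
    ∀ Q : Matrix (Fin 3) (Fin 3) ℝ, Q.IsSymm → Q.trace = 0 →
      fstar ≤ fbulk a2 b2 c2 Q
      ∧ (fbulk a2 b2 c2 Q = fstar ↔
          ∃ n : Fin 3 → ℝ, n ⬝ᵥ n = 1
            ∧ Q = splus • (vecMulVec n n - (3 : ℝ)⁻¹ • (1 : Matrix (Fin 3) (Fin 3) ℝ))) := by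
  obtain ⟨hsp_pos, hrel⟩ := splus_facts a2 b2 c2 splus ha hb hc hsplus
  intro Q hsym htrQ
  have hH : Q.IsHermitian := by
    rwa [Matrix.IsHermitian, conjTranspose_eq_transpose_of_trivial]
  set V : Matrix (Fin 3) (Fin 3) ℝ := (hH.eigenvectorUnitary : Matrix (Fin 3) (Fin 3) ℝ)
    with hVdef
  have hV1 : star V * V = 1 := Matrix.mem_unitaryGroup_iff'.mp hH.eigenvectorUnitary.2
  have hV2 : V * star V = 1 := Matrix.mem_unitaryGroup_iff.mp hH.eigenvectorUnitary.2
  set l := hH.eigenvalues with hldef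
  have hspec : Q = V * diagonal l * star V := by simpa using hH.spectral_theorem
  set x := l 0 with hxdef
  set y := l 1 with hydef
  set z := l 2 with hzdef
  have htr1 : x + y + z = 0 := by
    have h : Q.trace = x + y + z := by
      rw [hspec, myconj_trace _ _ hV1, trace_diagonal, Fin.sum_univ_three]
    rw [htrQ] at h; linarith
  have hQQ : Q * Q = V * (diagonal l * diagonal l) * star V := by
    rw [hspec, myconj_mul _ _ _ hV1]
  have hQQQ : Q * Q * Q = V * (diagonal l * diagonal l * diagonal l) * star V := by
    rw [hQQ, hspec, myconj_mul _ _ _ hV1]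
  have hp : (Q*Q).trace = x^2 + y^2 + z^2 := by
    rw [hQQ, myconj_trace _ _ hV1, diagonal_mul_diagonal, trace_diagonal, Fin.sum_univ_three]
    try simp only [Pi.mul_apply]
    ring
  have hq : (Q*Q*Q).trace = x^3 + y^3 + z^3 := by
    rw [hQQQ, myconj_trace _ _ hV1, diagonal_mul_diagonal, diagonal_mul_diagonal,
      trace_diagonal, Fin.sum_univ_three]
    try simp only [Pi.mul_apply]
    ring
  clear_value V l x y z
  have hppos : (0:ℝ) ≤ x^2 + y^2 + z^2 := by positivity
  set s := Real.sqrt (3*(x^2+y^2+z^2)/2) with hsdef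
  have hs0 : 0 ≤ s := Real.sqrt_nonneg _
  have hps : x^2 + y^2 + z^2 = 2/3 * s^2 := by
    rw [hsdef, Real.sq_sqrt (by linarith)]; ring
  clear_value s
  have hq2 : (x^2+y^2+z^2)^3 - 6*(x^3+y^3+z^3)^2 = 2*((x-y)*(y-z)*(x-z))^2 := by
    rw [show z = -x - y by linarith]; ring
  have hp3 : (x^2+y^2+z^2)^3 = 8/27*s^6 := by rw [hps]; ring
  have h6 : (x^3+y^3+z^3)^2 ≤ (2/9*s^3)^2 := by
    nlinarith [sq_nonneg ((x-y)*(y-z)*(x-z)), hq2, hp3]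
  have ht0 : (0:ℝ) ≤ 2/9*s^3 := by positivity
  have hqle : x^3+y^3+z^3 ≤ 2/9 * s^3 := by
    have habs : |x^3+y^3+z^3| ≤ 2/9*s^3 := by
      have := Real.sqrt_le_sqrt h6
      rwa [Real.sqrt_sq_eq_abs, Real.sqrt_sq ht0] at this
    exact le_trans (le_abs_self _) habs
  have hfb : fbulk a2 b2 c2 Q = -(a2/3)*s^2 + (c2/9)*s^4 - (b2/3)*(x^3+y^3+z^3) := by
    simp only [fbulk]
    rw [hp, hq, hps]; ring
  obtain ⟨hmin, heqs⟩ := scalar_min a2 b2 c2 splus s ha hb hc hrel hsp_pos hs0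
  have hmul : (b2/3)*(x^3+y^3+z^3) ≤ (b2/3)*(2/9*s^3) :=
    mul_le_mul_of_nonneg_left hqle (by positivity)
  have hge : fstar ≤ fbulk a2 b2 c2 Q := by
    rw [hfb, hfstar]; linarith [hmin, hmul]
  refine ⟨hge, ?_, ?_⟩
  · -- equality implies uniaxial form
    intro heq
    have hgs_eq : -(a2/3)*s^2 - (2*b2/27)*s^3 + (c2/9)*s^4
        = -(a2/3)*splus^2 - (2*b2/27)*splus^3 + (c2/9)*splus^4 := by
      rw [hfb] at heq; rw [hfstar] at heq; linarith [hmin, hmul]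
    have hseq : s = splus := heqs hgs_eq
    have hq_eq : x^3+y^3+z^3 = 2/9 * s^3 := by
      have h1 : (b2/3)*(x^3+y^3+z^3) = (b2/3)*(2/9*s^3) := by
        rw [hfb] at heq; rw [hfstar] at heq; linarith [hmin, hmul]
      have hb3 : (b2/3) ≠ 0 := by positivity
      exact mul_left_cancel₀ hb3 h1
    have hspos : 0 < s := hseq ▸ hsp_pos
    have hprod : (x-y)*(y-z)*(x-z) = 0 := by
      have h2 : 2*((x-y)*(y-z)*(x-z))^2 = 0 := by
        rw [← hq2, hq_eq, hps]; ring
      have h3 : ((x-y)*(y-z)*(x-z))^2 = 0 := by linarith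
      exact pow_eq_zero_iff (n := 2) (by norm_num) |>.mp h3
    have hbuild : ∀ k : Fin 3, l k = 2*s/3 → (∀ i, i ≠ k → l i = -s/3) →
        ∃ n : Fin 3 → ℝ, n ⬝ᵥ n = 1
          ∧ Q = splus • (vecMulVec n n - (3 : ℝ)⁻¹ • (1 : Matrix (Fin 3) (Fin 3) ℝ)) := by
      intro k hk hko
      rw [← hseq]
      exact build Q V l k s hV1 hV2 hspec hk hko
    have hfin : ∀ i : Fin 3, i = 0 ∨ i = 1 ∨ i = 2 := by decide
    rcases mul_eq_zero.mp hprod with h12 | hxz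
    · rcases mul_eq_zero.mp h12 with hxy | hyz
      · -- x = y, third is z
        have hxy' : x = y := by linarith
        have hz2 : z = -2*x := by linarith
        have ez2 : z^2 = 4*x^2 := by rw [hz2]; ring
        have ez3 : z^3 = -(8*x^3) := by rw [hz2]; ring
        have ey2 : y^2 = x^2 := by rw [← hxy']
        have ey3 : y^3 = x^3 := by rw [← hxy']
        have hx2 : x^2 = s^2/9 := by linarith [hps]
        have hx3 : x^3 = -(s^3)/27 := by linarith [hq_eq]
        have hxv : x = -s/3 := eig_identify s x hspos hx2 hx3
        refine hbuild 2 (by rw [← hzdef]; linarith) ?_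
        intro i hi
        rcases hfin i with rfl | rfl | rfl
        · rw [← hxdef]; linarith
        · rw [← hydef]; linarith
        · exact absurd rfl hi
      · -- y = z, third is x
        have hyz' : y = z := by linarith
        have hx2' : x = -2*y := by linarith
        have ex2 : x^2 = 4*y^2 := by rw [hx2']; ring
        have ex3 : x^3 = -(8*y^3) := by rw [hx2']; ring
        have ez2 : z^2 = y^2 := by rw [← hyz']
        have ez3 : z^3 = y^3 := by rw [← hyz']
        have hy2 : y^2 = s^2/9 := by linarith [hps]
        have hy3 : y^3 = -(s^3)/27 := by linarith [hq_eq]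
        have hyv : y = -s/3 := eig_identify s y hspos hy2 hy3
        refine hbuild 0 (by rw [← hxdef]; linarith) ?_
        intro i hi
        rcases hfin i with rfl | rfl | rfl
        · exact absurd rfl hi
        · rw [← hydef]; linarith
        · rw [← hzdef]; linarith
    · -- x = z, third is y
      have hxz' : x = z := by linarith
      have hy2' : y = -2*x := by linarith
      have ey2 : y^2 = 4*x^2 := by rw [hy2']; ring
      have ey3 : y^3 = -(8*x^3) := by rw [hy2']; ring
      have ez2 : z^2 = x^2 := by rw [← hxz']
      have ez3 : z^3 = x^3 := by rw [← hxz']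
      have hx2 : x^2 = s^2/9 := by linarith [hps]
      have hx3 : x^3 = -(s^3)/27 := by linarith [hq_eq]
      have hxv : x = -s/3 := eig_identify s x hspos hx2 hx3
      refine hbuild 1 (by rw [← hydef]; linarith) ?_
      intro i hi
      rcases hfin i with rfl | rfl | rfl
      · rw [← hxdef]; linarith
      · exact absurd rfl hi
      · rw [← hzdef]; linarith
  · -- reverse: the form gives the value fstar
    rintro ⟨n, hn, hQform⟩
    obtain ⟨ht2, ht3⟩ := rev_traces Q n splus hn hQform
    simp only [fbulk]
    rw [ht2, ht3, hfstar]; ring
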